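/- Let f, g : ℂ → ℂ be transcendental entire functions, let ϑ : ℂ → ℂ be a homeomorphism of the plane, and let U ⊆ ℂ be a set such that ϑ(f(z)) = g(ϑ(z)) for all z ∈ U, with I(f) ⊆ U and I(g) ⊆ ϑ(U). Suppose in addition that there exist R₀ > 0 and s > 0 such that |ϑ(z)| ≥ |z|^s and |ϑ^{-1}(z)| ≥ |z|^s whenever |z| > R₀. Then for every R > 0, ϑ(X_R(f)) = X_R(g). -/

import Mathlib

/-- A function `f : ℂ → ℂ` is transcendental entire if it is holomorphic on all of `ℂ`
and is not a polynomial. -/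
def TranscendentalEntire (f : ℂ → ℂ) : Prop :=
  Differentiable ℂ f ∧ ¬ ∃ p : Polynomial ℂ, ∀ z, f z = p.eval z

/-- The escaping set `I(f) = { z : |f^n(z)| → ∞ }`. -/
def escapingSet (f : ℂ → ℂ) : Set ℂ :=
  {z | Filter.Tendsto (fun n : ℕ => ‖f^[n] z‖) Filter.atTop Filter.atTop}

/-- The set `X_R(f) = { z : ∃ ℓ, ∀ n, |f^{n+ℓ}(z)| ≥ exp^n(R) }`, where `exp^n` is the
`n`-th iterate of the real exponential. -/
def Xset (f : ℂ → ℂ) (R : ℝ) : Set ℂ :=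
  {z | ∃ ℓ : ℕ, ∀ n : ℕ, Real.exp^[n] R ≤ ‖f^[n + ℓ] z‖}


lemma exp_iter_add_le : ∀ (n : ℕ) (x : ℝ), x + n ≤ Real.exp^[n] x := by
  intro n
  induction n with
  | zero => intro x; simp
  | succ n ih =>
    intro x
    rw [Function.iterate_succ_apply]
    have h1 := ih (Real.exp x)
    have h2 := Real.add_one_le_exp x
    push_cast
    linarith

lemma exp_two_iter (x : ℝ) : Real.exp 1 * x ≤ Real.exp^[2] x := by
  have h1 : x + 1 ≤ Real.exp x := Real.add_one_le_exp x
  have h2 : Real.exp (1 + x) ≤ Real.exp (Real.exp x) := Real.exp_le_exp.2 (by linarith)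
  have h3 : Real.exp 1 * x ≤ Real.exp 1 * Real.exp x :=
    mul_le_mul_of_nonneg_left (by linarith) (Real.exp_pos 1).le
  have h4 : Real.exp 1 * Real.exp x = Real.exp (1 + x) := (Real.exp_add 1 x).symm
  show Real.exp 1 * x ≤ Real.exp (Real.exp x)
  linarith

lemma exp_pow_iter : ∀ (k : ℕ) (x : ℝ), Real.exp 1 ^ k * x ≤ Real.exp^[2 * k] x := by
  intro k
  induction k with
  | zero => intro x; simp
  | succ k ih =>
    intro x
    have h1 : Real.exp^[2 * (k + 1)] x = Real.exp^[2 * k] (Real.exp^[2] x) := by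
      rw [show 2 * (k + 1) = 2 * k + 2 by ring, Function.iterate_add_apply]
    rw [h1]
    have h2 := ih (Real.exp^[2] x)
    have h3 := exp_two_iter x
    have h4 : Real.exp 1 ^ (k + 1) * x = Real.exp 1 ^ k * (Real.exp 1 * x) := by ring
    have h5 : Real.exp 1 ^ k * (Real.exp 1 * x) ≤ Real.exp 1 ^ k * Real.exp^[2] x :=
      mul_le_mul_of_nonneg_left h3 (pow_nonneg (Real.exp_pos 1).le k)
    linarith

lemma key_estimate (R₀ s R : ℝ) (hs : 0 < s) (hR : 0 < R) :
    ∃ m : ℕ, ∀ n : ℕ, R₀ < Real.exp^[n + m] R ∧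
      Real.exp^[n] R ≤ Real.exp^[n + m] R ^ s := by
  obtain ⟨k, hk⟩ := exists_nat_ge (max R₀ (1 / s))
  have hkR : R₀ ≤ (k : ℝ) := le_trans (le_max_left _ _) hk
  have hks : 1 / s ≤ (k : ℝ) := le_trans (le_max_right _ _) hk
  have hsk : 1 ≤ s * k := by
    rw [div_le_iff₀ hs] at hks; linarith [mul_comm s (k : ℝ)]
  have hek : (k : ℝ) + 1 ≤ Real.exp 1 ^ k := by
    have h : Real.exp 1 ^ k = Real.exp k := by
      rw [← Real.exp_nat_mul]; norm_num
    rw [h]; exact Real.add_one_le_exp k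
  refine ⟨2 * k + 1, fun n => ?_⟩
  have hpos : 0 < Real.exp^[n] R := by
    have h1 := exp_iter_add_le n R
    have h2 : (0 : ℝ) ≤ (n : ℝ) := Nat.cast_nonneg n
    linarith
  constructor
  · have h1 := exp_iter_add_le (n + (2 * k + 1)) R
    have h2 : (k : ℝ) ≤ ((n + (2 * k + 1) : ℕ) : ℝ) := by push_cast; linarith [Nat.cast_nonneg (α := ℝ) n, Nat.cast_nonneg (α := ℝ) k]
    linarith
  · have h1 : Real.exp^[n + (2 * k + 1)] R = Real.exp (Real.exp^[n + 2 * k] R) := by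
      rw [show n + (2 * k + 1) = (n + 2 * k) + 1 by ring, Function.iterate_succ_apply']
    have h2 : Real.exp^[n + 2 * k] R = Real.exp^[2 * k] (Real.exp^[n] R) := by
      rw [add_comm n (2 * k), Function.iterate_add_apply]
    have h3 : Real.exp 1 ^ k * Real.exp^[n] R ≤ Real.exp^[n + 2 * k] R := by
      rw [h2]; exact exp_pow_iter k _
    have h4 : Real.exp (Real.exp^[n + 2 * k] R) ^ s
        = Real.exp (Real.exp^[n + 2 * k] R * s) := by
      rw [← Real.exp_mul]
    rw [h1, h4]
    have h5 : Real.exp^[n] R ≤ Real.exp^[n + 2 * k] R * s := by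
      have : Real.exp^[n] R ≤ s * k * Real.exp^[n] R := by nlinarith
      nlinarith [mul_le_mul_of_nonneg_right h3 hs.le,
        mul_le_mul_of_nonneg_right (mul_le_mul_of_nonneg_right hek hpos.le) hs.le]
    calc Real.exp^[n] R ≤ Real.exp^[n + 2 * k] R * s := h5
    _ ≤ Real.exp (Real.exp^[n + 2 * k] R * s) := by linarith [Real.add_one_le_exp (Real.exp^[n + 2 * k] R * s)]


lemma escaping_iterate {f : ℂ → ℂ} {z : ℂ} (h : z ∈ escapingSet f) (k : ℕ) :
    f^[k] z ∈ escapingSet f := by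
  have h2 : Filter.Tendsto (fun n : ℕ => ‖f^[n + k] z‖)
      Filter.atTop Filter.atTop :=
    h.comp (Filter.tendsto_add_atTop_nat k)
  have h3 : (fun n : ℕ => ‖f^[n] (f^[k] z)‖)
      = fun n : ℕ => ‖f^[n + k] z‖ := by
    funext n; rw [Function.iterate_add_apply]
  show Filter.Tendsto (fun n : ℕ => ‖f^[n] (f^[k] z)‖) Filter.atTop Filter.atTop
  rw [h3]; exact h2

lemma Xset_subset_escaping {f : ℂ → ℂ} {R : ℝ} (hR : 0 < R) :
    Xset f R ⊆ escapingSet f := by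
  rintro z ⟨ℓ, hℓ⟩
  refine Filter.tendsto_atTop.2 fun b => Filter.eventually_atTop.2 ⟨ℓ + ⌈b⌉₊, fun n hn => ?_⟩
  have h1 := hℓ (n - ℓ)
  have h2 : n - ℓ + ℓ = n := Nat.sub_add_cancel (by omega)
  rw [h2] at h1
  have h3 := exp_iter_add_le (n - ℓ) R
  have h4 : (⌈b⌉₊ : ℝ) ≤ ((n - ℓ : ℕ) : ℝ) := by
    have : ⌈b⌉₊ ≤ n - ℓ := by omega
    exact_mod_cast this
  have h5 : b ≤ (⌈b⌉₊ : ℝ) := Nat.le_ceil b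
  linarith

lemma conj_orbit {f g : ℂ → ℂ} {ϑ : ℂ ≃ₜ ℂ} {U : Set ℂ}
    (hconj : ∀ z ∈ U, ϑ (f z) = g (ϑ z)) {z : ℂ} (hz : ∀ k, f^[k] z ∈ U) :
    ∀ k, ϑ (f^[k] z) = g^[k] (ϑ z) := by
  intro k
  induction k with
  | zero => rfl
  | succ k ih =>
    rw [Function.iterate_succ_apply', Function.iterate_succ_apply',
      hconj _ (hz k), ih]

theorem image_Xset_eq_of_conj
    (f g : ℂ → ℂ) (hf : TranscendentalEntire f) (hg : TranscendentalEntire g)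
    (ϑ : ℂ ≃ₜ ℂ) (U : Set ℂ)
    (hconj : ∀ z ∈ U, ϑ (f z) = g (ϑ z))
    (hIf : escapingSet f ⊆ U) (hIg : escapingSet g ⊆ ϑ '' U)
    (hHolder : ∃ R₀ > (0 : ℝ), ∃ s > (0 : ℝ), ∀ z : ℂ, R₀ < ‖z‖ →
      ‖z‖ ^ s ≤ ‖ϑ z‖ ∧ ‖z‖ ^ s ≤ ‖ϑ.symm z‖) :
    ∀ R : ℝ, 0 < R → ϑ '' Xset f R = Xset g R := by
  obtain ⟨R₀, hR₀, s, hs, hH⟩ := hHolder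
  intro R hR
  obtain ⟨m, hm⟩ := key_estimate R₀ s R hs hR
  apply Set.ext
  intro w
  constructor
  · rintro ⟨z, ⟨ℓ, hℓ⟩, rfl⟩
    have hzI : z ∈ escapingSet f := Xset_subset_escaping hR ⟨ℓ, hℓ⟩
    have horb : ∀ k, f^[k] z ∈ U := fun k => hIf (escaping_iterate hzI k)
    have hc := conj_orbit hconj horb
    refine ⟨ℓ + m, fun n => ?_⟩
    have h1 := hℓ (n + m)
    have h2 : n + m + ℓ = n + (ℓ + m) := by omega
    rw [h2] at h1
    obtain ⟨hmR₀, hmR⟩ := hm n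
    have habs : R₀ < ‖f^[n + (ℓ + m)] z‖ := lt_of_lt_of_le hmR₀ h1
    have h3 := (hH _ habs).1
    have h4 : Real.exp^[n + m] R ^ s ≤ ‖f^[n + (ℓ + m)] z‖ ^ s := by
      apply Real.rpow_le_rpow _ h1 hs.le
      linarith
    rw [← hc (n + (ℓ + m))]
    calc Real.exp^[n] R ≤ Real.exp^[n + m] R ^ s := hmR
    _ ≤ ‖f^[n + (ℓ + m)] z‖ ^ s := h4
    _ ≤ ‖ϑ (f^[n + (ℓ + m)] z)‖ := h3
  · rintro ⟨ℓ, hℓ⟩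
    have hwI : w ∈ escapingSet g := Xset_subset_escaping hR ⟨ℓ, hℓ⟩
    have horb : ∀ k, g^[k] w ∈ ϑ '' U := fun k => hIg (escaping_iterate hwI k)
    set z := ϑ.symm w with hz
    have hc : ∀ k, ϑ.symm (g^[k] w) = f^[k] z := by
      intro k
      induction k with
      | zero => rfl
      | succ k ih =>
        obtain ⟨u, hu, huw⟩ := horb k
        have hu' : ϑ.symm (g^[k] w) = u := by rw [← huw]; exact ϑ.symm_apply_apply u
        rw [Function.iterate_succ_apply', Function.iterate_succ_apply', ← ih, hu',
          ← huw, ← hconj u hu, ϑ.symm_apply_apply]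
    refine ⟨z, ⟨ℓ + m, fun n => ?_⟩, ϑ.apply_symm_apply w⟩
    have h1 := hℓ (n + m)
    have h2 : n + m + ℓ = n + (ℓ + m) := by omega
    rw [h2] at h1
    obtain ⟨hmR₀, hmR⟩ := hm n
    have habs : R₀ < ‖g^[n + (ℓ + m)] w‖ := lt_of_lt_of_le hmR₀ h1
    have h3 := (hH _ habs).2
    have h4 : Real.exp^[n + m] R ^ s ≤ ‖g^[n + (ℓ + m)] w‖ ^ s := by
      apply Real.rpow_le_rpow _ h1 hs.le
      linarith
    rw [← hc (n + (ℓ + m))]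
    calc Real.exp^[n] R ≤ Real.exp^[n + m] R ^ s := hmR
    _ ≤ ‖g^[n + (ℓ + m)] w‖ ^ s := h4
    _ ≤ ‖ϑ.symm (g^[n + (ℓ + m)] w)‖ := h3
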